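/- arXiv:2402.05271 — 3 statements merged into one kernel-verified Lean document; each statement's English description precedes it below -/
import Mathlib

section
/- Let g : ℝ^k → ℝ be differentiable, W ∈ ℝ^{k×d}, and for u ∈ ℝ^d define F_u : ℝ^{k×d} → ℝ by F_u(M) = g(M u). Then for all x, z ∈ ℝ^d, the Frobenius inner product of the gradients with respect to the weight matrix satisfies ⟨∇_M F_x(W), ∇_M F_z(W)⟩ = (∇g(Wx) · ∇g(Wz)) · (x · z). That is, the layerwise empirical NTK factors as the pre-activation tangent kernel value ∇g(Wx)·∇g(Wz) times the input inner product xᵀz. -/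
open Matrix

attribute [local instance] Matrix.frobeniusNormedAddCommGroup Matrix.frobeniusNormedSpace

/-- The gradient of a real-valued function on Euclidean space. -/
noncomputable def egrad {m : ℕ} (g : EuclideanSpace ℝ (Fin m) → ℝ)
    (u : EuclideanSpace ℝ (Fin m)) : EuclideanSpace ℝ (Fin m) :=
  gradient g u

/-- The matrix of partial derivatives of a scalar function of a matrix argument:
`(∇_M F(W))_{ij} = ∂F/∂W_{ij}`. -/
noncomputable def matGrad {k d : ℕ} (F : Matrix (Fin k) (Fin d) ℝ → ℝ)
    (W : Matrix (Fin k) (Fin d) ℝ) : Matrix (Fin k) (Fin d) ℝ :=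
  Matrix.of fun i j => fderiv ℝ F W (Matrix.single i j 1)

section aux

variable {k d : ℕ}

/-- mulVec by a fixed vector, as a linear map into EuclideanSpace. -/
noncomputable def mulVecCLM (x : EuclideanSpace ℝ (Fin d)) :
    Matrix (Fin k) (Fin d) ℝ →L[ℝ] EuclideanSpace ℝ (Fin k) :=
  LinearMap.toContinuousLinearMap
    { toFun := fun M => (WithLp.equiv 2 (Fin k → ℝ)).symm (M.mulVec x)
      map_add' := fun A B => by
        simp [Matrix.add_mulVec]
      map_smul' := fun c A => by
        simp [Matrix.smul_mulVec] }

lemma fderiv_inner_grad {m : ℕ} (g : EuclideanSpace ℝ (Fin m) → ℝ)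
    (u v : EuclideanSpace ℝ (Fin m)) :
    fderiv ℝ g u v = ∑ i, gradient g u i * v i := by
  have : fderiv ℝ g u v = inner ℝ (gradient g u) v := by
    rw [gradient, InnerProductSpace.toDual_symm_apply]
  rw [this, PiLp.inner_apply]
  simp [RCLike.inner_apply, mul_comm]

lemma matGrad_apply (g : EuclideanSpace ℝ (Fin k) → ℝ) (hg : Differentiable ℝ g)
    (W : Matrix (Fin k) (Fin d) ℝ) (x : EuclideanSpace ℝ (Fin d)) (i : Fin k) (j : Fin d) :
    matGrad (fun M => g (WithLp.toLp 2 (M.mulVec x))) W i j = gradient g (WithLp.toLp 2 (W.mulVec x)) i * x j := by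
  have hcomp : (fun M : Matrix (Fin k) (Fin d) ℝ => g (WithLp.toLp 2 (M.mulVec x))) = g ∘ (mulVecCLM x) := rfl
  have hf : fderiv ℝ (fun M : Matrix (Fin k) (Fin d) ℝ => g (WithLp.toLp 2 (M.mulVec x))) W =
      (fderiv ℝ g (WithLp.toLp 2 (W.mulVec x))).comp (mulVecCLM x) := by
    rw [hcomp]
    have := fderiv_comp (𝕜 := ℝ) W (hg _) (mulVecCLM x).differentiableAt
    erw [this, (mulVecCLM x).fderiv]
    rfl
  have hstd : (mulVecCLM x : Matrix (Fin k) (Fin d) ℝ →L[ℝ] EuclideanSpace ℝ (Fin k))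
      (Matrix.single i j 1) = EuclideanSpace.single i (x j) := by
    ext i'
    simp [mulVecCLM, Matrix.mulVec, Matrix.single, dotProduct,
      EuclideanSpace.single_apply]
    by_cases h : i = i' <;> simp [h, eq_comm (a := i')]
  rw [matGrad, Matrix.of_apply, hf, ContinuousLinearMap.comp_apply, hstd,
    fderiv_inner_grad]
  simp [EuclideanSpace.single_apply, mul_comm]

end aux

/-- pre-activation to neural tangent identity.
For `F_u(M) = g(Mu)`, the Frobenius inner product of the weight-gradients factors as the
PTK value times the input inner product:
`⟨∇_M F_x(W), ∇_M F_z(W)⟩ = (∇g(Wx)·∇g(Wz)) · (x·z)`. -/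
theorem entk_eq_ptk_mul_inner
    (k d : ℕ) (g : EuclideanSpace ℝ (Fin k) → ℝ) (hg : Differentiable ℝ g)
    (W : Matrix (Fin k) (Fin d) ℝ) :
    ∀ x z : EuclideanSpace ℝ (Fin d),
      ((matGrad (fun M => g (WithLp.toLp 2 (M.mulVec x))) W)ᵀ * matGrad (fun M => g (WithLp.toLp 2 (M.mulVec z))) W).trace =
        ((egrad g (WithLp.toLp 2 (W.mulVec x))) ⬝ᵥ (egrad g (WithLp.toLp 2 (W.mulVec z)))) * (x ⬝ᵥ z) := by
  intro x z
  rw [Matrix.trace]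
  simp only [Matrix.diag_apply, Matrix.mul_apply, Matrix.transpose_apply]
  simp only [matGrad_apply g hg W x, matGrad_apply g hg W z]
  rw [dotProduct, dotProduct, Finset.sum_mul_sum]
  rw [Finset.sum_comm]
  apply Finset.sum_congr rfl
  intro i _
  apply Finset.sum_congr rfl
  intro j _
  unfold egrad
  ring
end

section
/- Let Kn ∈ ℝ^{n×n} be a symmetric positive semidefinite matrix, let D ∈ ℝ^{n×n} be diagonal, and let X ∈ ℝ^{n×d}. Then trace((Xᵀ D Kn D X)(Xᵀ D Kn² D X)) ≥ 0. Equivalently, for symmetric positive semidefinite matrices A, C ∈ ℝ^{n×n}, trace(C A C A²) ≥ 0. -/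
open Matrix
open scoped MatrixOrder

lemma psd_trace_nonneg {n : ℕ} {M : Matrix (Fin n) (Fin n) ℝ} (hM : M.PosSemidef) :
    0 ≤ M.trace := by
  rw [Matrix.trace]
  refine Finset.sum_nonneg fun i _ => ?_
  exact hM.diag_nonneg

lemma psd_trace_mul_nonneg {n : ℕ} {A B : Matrix (Fin n) (Fin n) ℝ}
    (hA : A.PosSemidef) (hB : B.PosSemidef) : 0 ≤ (A * B).trace := by
  set S := CFC.sqrt B with hS
  have hSS : S * S = B := CFC.sqrt_mul_sqrt_self B hB.nonneg
  have hSH : Sᴴ = S := (CFC.sqrt_nonneg B).posSemidef.1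
  have h1 : (A * B).trace = (S * A * S).trace := by
    rw [← hSS, ← Matrix.trace_mul_cycle, mul_assoc]
  rw [h1]
  have : (S * A * Sᴴ).PosSemidef := hA.mul_mul_conjTranspose_same S
  rw [hSH] at this
  exact psd_trace_nonneg this

lemma psd_trace_key {n : ℕ} (A C : Matrix (Fin n) (Fin n) ℝ)
    (hA : A.PosSemidef) (hC : C.PosSemidef) :
    0 ≤ (C * A * C * (A * A)).trace := by
  set S := CFC.sqrt A with hS
  have hSS : S * S = A := CFC.sqrt_mul_sqrt_self A hA.nonneg
  have hSH : Sᴴ = S := (CFC.sqrt_nonneg A).posSemidef.1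
  have hM : (S * C * S).PosSemidef := by
    have := hC.mul_mul_conjTranspose_same S
    rwa [hSH] at this
  have hMM : ((S * C * S) * (S * C * S)).PosSemidef := by
    have := hM.pow 2
    rwa [pow_two] at this
  have key : (C * A * C * (A * A)).trace = ((S * C * S) * (S * C * S) * A).trace := by
    rw [← hSS]
    conv_rhs => rw [show S * C * S * (S * C * S) * (S * S)
      = S * (C * (S * (S * (C * (S * (S * S)))))) from by simp only [mul_assoc],
      Matrix.trace_mul_comm]
    simp only [mul_assoc]
  rw [key]
  exact psd_trace_mul_nonneg hMM hA

/-- For a symmetric positive semidefinite PTK matrix `Kn`, a diagonal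
matrix `D` and data `X`, `trace((XᵀDKnDX)(XᵀDKn²DX)) ≥ 0`; equivalently, for symmetric
positive semidefinite `A, C`, `trace(C A C A²) ≥ 0`. -/
theorem nonneg_trace_covariance_of_centered_nfm_agop
    (n d : ℕ) (Kn : Matrix (Fin n) (Fin n) ℝ) (hKn : Kn.PosSemidef)
    (D : Matrix (Fin n) (Fin n) ℝ) (hD : D.IsDiag)
    (X : Matrix (Fin n) (Fin d) ℝ) :
    0 ≤ ((Xᵀ * D * Kn * D * X) * (Xᵀ * D * (Kn * Kn) * D * X)).trace ∧
    ∀ (A C : Matrix (Fin n) (Fin n) ℝ), A.PosSemidef → C.PosSemidef →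
      0 ≤ (C * A * C * (A * A)).trace := by
  constructor
  · set B := D * X with hB
    have hC : ((D * X) * (D * X)ᴴ).PosSemidef := Matrix.posSemidef_self_mul_conjTranspose _
    set C := (D * X) * (D * X)ᴴ with hCdef
    have key : ((Xᵀ * D * Kn * D * X) * (Xᵀ * D * (Kn * Kn) * D * X)).trace
        = (C * Kn * C * (Kn * Kn)).trace := by
      have hDT : Dᵀ = D := by
        ext i j
        by_cases h : i = j
        · subst h; simp [Matrix.transpose_apply]
        · rw [Matrix.transpose_apply, hD (fun hij => h hij.symm), hD h]
      have h1 : Xᵀ * D = (D * X)ᴴ := by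
        rw [Matrix.conjTranspose_eq_transpose_of_trivial, Matrix.transpose_mul, hDT]
      have h2 : Xᵀ * D * Kn * D * X = (D * X)ᴴ * Kn * (D * X) := by
        rw [← h1]; simp only [Matrix.mul_assoc]
      have h3 : Xᵀ * D * (Kn * Kn) * D * X = (D * X)ᴴ * (Kn * Kn) * (D * X) := by
        rw [← h1]; simp only [Matrix.mul_assoc]
      rw [h2, h3, hCdef]
      conv_lhs => rw [show (D * X)ᴴ * Kn * (D * X) * ((D * X)ᴴ * (Kn * Kn) * (D * X))
        = ((D * X)ᴴ * Kn * ((D * X) * ((D * X)ᴴ * (Kn * Kn)))) * (D * X) from by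
          simp only [Matrix.mul_assoc], Matrix.trace_mul_comm]
      simp only [Matrix.mul_assoc]
    rw [key]
    exact psd_trace_key Kn C hKn hC
  · intro A C hA hC
    exact psd_trace_key A C hA hC
end

section
/- Let k, d, n ≥ 1. Let a ∈ ℝ^k have i.i.d. standard Gaussian entries and let W ∈ ℝ^{k×d} have i.i.d. Gaussian entries with mean 0 and variance 1/k, with a and W independent. Let X ∈ ℝ^{n×d} be a fixed data matrix, let y ∈ ℝ^n be a fixed label vector, Y := diag(y), and define Kn := X Wᵀ diag(a)² W Xᵀ. Then E[Xᵀ Y Kn Y X] = (Xᵀ Y X)². -/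
open Matrix MeasureTheory ProbabilityTheory
open Real Set

lemma raw_sq_int {b : ℝ} (hb : 0 < b) :
    ∫ x : ℝ, x ^ 2 * rexp (-b * x ^ 2) = √π / 2 * (1 / b) ^ ((3 : ℝ) / 2) := by
  have habs : ∫ x : ℝ, x ^ 2 * rexp (-b * x ^ 2)
      = 2 * ∫ x in Ioi (0:ℝ), x ^ 2 * rexp (-b * x ^ 2) := by
    rw [← integral_comp_abs (f := fun x => x ^ 2 * rexp (-b * x ^ 2))]
    congr 1 with x
    rw [sq_abs]
  have hsub : ∫ x in Ioi (0:ℝ), x ^ 2 * rexp (-b * x ^ 2)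
      = (1 / 2) * ((1 / b) ^ ((3:ℝ)/2) * Real.Gamma ((3:ℝ)/2)) := by
    have h := integral_comp_rpow_Ioi_of_pos
      (g := fun y : ℝ => y ^ ((3:ℝ)/2 - 1) * rexp (-(b * y))) (p := 2) zero_lt_two
    have h2 : ∫ x in Ioi (0:ℝ), (2 * x ^ ((2:ℝ) - 1)) •
        ((x ^ (2:ℝ)) ^ ((3:ℝ)/2 - 1) * rexp (-(b * x ^ (2:ℝ))))
        = 2 * ∫ x in Ioi (0:ℝ), x ^ 2 * rexp (-b * x ^ 2) := by
      rw [← integral_const_mul]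
      refine setIntegral_congr_fun measurableSet_Ioi fun x hx => ?_
      have hx0 : (0:ℝ) < x := hx
      have hxp : x ^ (2:ℝ) = x ^ (2:ℕ) := by
        rw [← Real.rpow_natCast x 2]; norm_num
      have hx12 : (x ^ (2:ℝ)) ^ ((3:ℝ)/2 - 1) = x := by
        rw [← Real.rpow_mul hx0.le]
        norm_num
      rw [smul_eq_mul, hx12, hxp]
      have : x ^ ((2:ℝ) - 1) = x := by
        rw [show (2:ℝ) - 1 = 1 by norm_num, Real.rpow_one]
      rw [this]
      ring_nf
    rw [h2] at h
    rw [integral_rpow_mul_exp_neg_mul_Ioi (by norm_num) hb] at h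
    linarith
  rw [habs, hsub]
  have hg : Real.Gamma ((3:ℝ)/2) = √π / 2 := by
    have := Real.Gamma_add_one (s := 1/2) (by norm_num)
    rw [show (1:ℝ)/2 + 1 = 3/2 by norm_num, Real.Gamma_one_half_eq] at this
    rw [this]; ring
  rw [hg]; ring

lemma gauss_density (v : NNReal) (hv : v ≠ 0) (g : ℝ → ℝ) :
    ∫ x, g x ∂(gaussianReal 0 v) = ∫ x, gaussianPDFReal 0 v x * g x := by
  rw [gaussianReal_of_var_ne_zero 0 hv]
  have : (gaussianPDF 0 v) = fun x => ((Real.toNNReal (gaussianPDFReal 0 v x) : NNReal) : ENNReal) := by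
    funext x; rw [gaussianPDF_def]; rfl
  rw [this, integral_withDensity_eq_integral_smul
    ((measurable_gaussianPDFReal 0 v).real_toNNReal) g]
  congr 1 with x
  rw [NNReal.smul_def, smul_eq_mul, Real.coe_toNNReal _ (gaussianPDFReal_nonneg 0 v x)]

lemma gauss_pdf_eq (v : NNReal) (hv : v ≠ 0) (x : ℝ) :
    gaussianPDFReal 0 v x = (√(2 * π * v))⁻¹ * rexp (-((2 * (v:ℝ))⁻¹) * x ^ 2) := by
  rw [gaussianPDFReal]
  have hv0 : (0:ℝ) < v := by positivity -- may fail
  congr 1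
  rw [sub_zero]
  congr 1
  field_simp

lemma integrable_dirac' {f : ℝ → ℝ} (a : ℝ) : Integrable f (Measure.dirac a) := by
  refine (integrable_const (f a)).congr ?_
  rw [MeasureTheory.ae_dirac_eq]
  exact Filter.eventually_pure.2 rfl

lemma rpow_two' (x : ℝ) : x ^ (2:ℝ) = x ^ 2 := by
  rw [← Real.rpow_natCast x 2]; norm_num

lemma gauss_sq_integrable (v : NNReal) : Integrable (fun x : ℝ => x ^ 2) (gaussianReal 0 v) := by
  by_cases hv : v = 0
  · rw [hv, gaussianReal_zero_var]; exact integrable_dirac' 0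
  · rw [gaussianReal_of_var_ne_zero 0 hv]
    have hpdf : (gaussianPDF 0 v) =
        fun x => ((Real.toNNReal (gaussianPDFReal 0 v x) : NNReal) : ENNReal) := by
      funext x; rw [gaussianPDF_def]; rfl
    rw [hpdf, integrable_withDensity_iff_integrable_smul
      ((measurable_gaussianPDFReal 0 v).real_toNNReal)]
    have hb : (0:ℝ) < (2 * (v:ℝ))⁻¹ := by
      have : (0:ℝ) < v := lt_of_le_of_ne v.2 (by exact_mod_cast (Ne.symm hv))
      positivity
    have hint : Integrable (fun x : ℝ => x ^ 2 * rexp (-(2 * (v:ℝ))⁻¹ * x ^ 2)) := by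
      have h := integrable_rpow_mul_exp_neg_mul_sq hb (s := 2) (by norm_num)
      simpa only [rpow_two'] using h
    refine (hint.const_mul ((√(2 * π * v))⁻¹)).congr ?_
    filter_upwards with x
    rw [NNReal.smul_def, smul_eq_mul, Real.coe_toNNReal _ (gaussianPDFReal_nonneg 0 v x),
      gauss_pdf_eq v hv]
    ring

lemma gauss_id_integrable (v : NNReal) : Integrable (fun x : ℝ => x) (gaussianReal 0 v) := by
  by_cases hv : v = 0
  · rw [hv, gaussianReal_zero_var]; exact integrable_dirac' 0
  · rw [gaussianReal_of_var_ne_zero 0 hv]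
    have hpdf : (gaussianPDF 0 v) =
        fun x => ((Real.toNNReal (gaussianPDFReal 0 v x) : NNReal) : ENNReal) := by
      funext x; rw [gaussianPDF_def]; rfl
    rw [hpdf, integrable_withDensity_iff_integrable_smul
      ((measurable_gaussianPDFReal 0 v).real_toNNReal)]
    have hb : (0:ℝ) < (2 * (v:ℝ))⁻¹ := by
      have : (0:ℝ) < v := lt_of_le_of_ne v.2 (by exact_mod_cast (Ne.symm hv))
      positivity
    have hint : Integrable (fun x : ℝ => x * rexp (-(2 * (v:ℝ))⁻¹ * x ^ 2)) :=
      integrable_mul_exp_neg_mul_sq hb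
    refine (hint.const_mul ((√(2 * π * v))⁻¹)).congr ?_
    filter_upwards with x
    rw [NNReal.smul_def, smul_eq_mul, Real.coe_toNNReal _ (gaussianPDFReal_nonneg 0 v x),
      gauss_pdf_eq v hv]
    ring

lemma gauss_mean (v : NNReal) : ∫ x, x ∂(gaussianReal 0 v) = 0 := by
  have hmap := gaussianReal_map_const_mul (μ := 0) (v := v) (-1)
  have h1 : (NNReal.mk ((-1:ℝ)^2) (sq_nonneg _) : NNReal) = 1 := by
    ext
    norm_num
  rw [mul_zero, h1, one_mul] at hmap
  have h2 := integral_map (μ := gaussianReal 0 v) (φ := fun x : ℝ => -1 * x)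
    (f := fun x : ℝ => x) (measurable_const_mul (-1)).aemeasurable
    aestronglyMeasurable_id
  rw [hmap] at h2
  have h3 : ∫ x : ℝ, -1 * x ∂(gaussianReal 0 v) = -∫ x : ℝ, x ∂(gaussianReal 0 v) := by
    rw [integral_const_mul]; ring
  rw [h3] at h2
  linarith

lemma gauss_sq_mean (v : NNReal) : ∫ x, x ^ 2 ∂(gaussianReal 0 v) = v := by
  by_cases hv : v = 0
  · rw [hv, gaussianReal_zero_var, integral_dirac]
    norm_num
  · have hvpos : (0:ℝ) < v := lt_of_le_of_ne v.2 (by exact_mod_cast (Ne.symm hv))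
    have hb : (0:ℝ) < (2 * (v:ℝ))⁻¹ := by positivity
    rw [gauss_density v hv (fun x => x ^ 2)]
    have : ∀ x : ℝ, gaussianPDFReal 0 v x * x ^ 2
        = (√(2 * π * v))⁻¹ * (x ^ 2 * rexp (-(2 * (v:ℝ))⁻¹ * x ^ 2)) := by
      intro x; rw [gauss_pdf_eq v hv]; ring
    simp_rw [this]
    rw [integral_const_mul, raw_sq_int hb]
    have h1b : (1:ℝ) / (2 * (v:ℝ))⁻¹ = 2 * v := by
      field_simp
    rw [h1b]
    have h32 : (2 * (v:ℝ)) ^ ((3:ℝ)/2) = (2 * (v:ℝ)) * √(2 * (v:ℝ)) := by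
      rw [show (3:ℝ)/2 = 1 + 1/2 by norm_num,
        Real.rpow_add (by positivity), Real.rpow_one, ← Real.sqrt_eq_rpow]
    rw [h32]
    have hsq : √(2 * π * (v:ℝ)) = √π * √(2 * (v:ℝ)) := by
      rw [← Real.sqrt_mul pi_pos.le]
      congr 1; ring
    rw [hsq]
    have hpi : (0:ℝ) < √π := Real.sqrt_pos.mpr pi_pos
    have h2v : (0:ℝ) < √(2 * (v:ℝ)) := Real.sqrt_pos.mpr (by positivity)
    field_simp

section PiLemmas

lemma integrable_pi_sq (kk : ℕ) (v : NNReal) (i : Fin kk) :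
    Integrable (fun a : Fin kk → ℝ => (a i) ^ 2)
      (Measure.pi fun _ => gaussianReal 0 v) := by
  letI : MeasureSpace ℝ := ⟨gaussianReal 0 v⟩
  haveI : IsProbabilityMeasure (volume : Measure ℝ) :=
    inferInstanceAs (IsProbabilityMeasure (gaussianReal 0 v))
  have h : Integrable (fun a : Fin kk → ℝ => ∏ j, (if j = i then (a j) ^ 2 else 1)) :=
    Integrable.fintype_prod (f := fun j x => if j = i then x ^ 2 else 1) (fun j => by
      by_cases hj : j = i
      · simp only [hj, if_true]; exact gauss_sq_integrable v
      · simpa [hj] using (integrable_const (1:ℝ)))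
  have he : (fun a : Fin kk → ℝ => ∏ j, (if j = i then (a j) ^ 2 else 1))
      = fun a : Fin kk → ℝ => (a i) ^ 2 := by
    funext a
    rw [Finset.prod_ite_eq' Finset.univ i (fun j => (a j) ^ 2)]
    simp
  rwa [he] at h

lemma integral_pi_sq (kk : ℕ) (v : NNReal) (i : Fin kk) :
    ∫ a : Fin kk → ℝ, (a i) ^ 2 ∂(Measure.pi fun _ => gaussianReal 0 v) = v := by
  letI : MeasureSpace ℝ := ⟨gaussianReal 0 v⟩
  haveI : IsProbabilityMeasure (volume : Measure ℝ) :=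
    inferInstanceAs (IsProbabilityMeasure (gaussianReal 0 v))
  have h : ∫ a : Fin kk → ℝ, ∏ j, (if j = i then (a j) ^ 2 else 1)
      = ∏ j : Fin kk, ∫ x : ℝ, (if j = i then x ^ 2 else 1) :=
    integral_fintype_prod_eq_prod (fun j x => if j = i then x ^ 2 else 1)
  have he : (fun a : Fin kk → ℝ => ∏ j, (if j = i then (a j) ^ 2 else 1))
      = fun a : Fin kk → ℝ => (a i) ^ 2 := by
    funext a
    rw [Finset.prod_ite_eq' Finset.univ i (fun j => (a j) ^ 2)]
    simp
  rw [he] at h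
  have hv : ∀ j : Fin kk, (∫ x : ℝ, (if j = i then x ^ 2 else 1) : ℝ)
      = if j = i then (v:ℝ) else 1 := by
    intro j
    by_cases hj : j = i
    · simp only [hj, if_true]; exact gauss_sq_mean v
    · simp [hj]
  rw [show (∫ a : Fin kk → ℝ, (a i) ^ 2 ∂(Measure.pi fun _ => gaussianReal 0 v))
      = ∫ a : Fin kk → ℝ, (a i) ^ 2 from rfl, h]
  simp_rw [hv]
  rw [Finset.prod_ite_eq' Finset.univ i (fun _ => (v:ℝ))]
  simp

end PiLemmas

section RowLemmas

lemma integrable_row (dd : ℕ) (v : NNReal) (s t : Fin dd) :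
    Integrable (fun r : Fin dd → ℝ => r s * r t)
      (Measure.pi fun _ => gaussianReal 0 v) := by
  letI : MeasureSpace ℝ := ⟨gaussianReal 0 v⟩
  haveI : IsProbabilityMeasure (volume : Measure ℝ) :=
    inferInstanceAs (IsProbabilityMeasure (gaussianReal 0 v))
  have h : Integrable (fun r : Fin dd → ℝ =>
      ∏ c, ((if c = s then r c else 1) * (if c = t then r c else 1))) :=
    Integrable.fintype_prod
      (f := fun c x => (if c = s then x else 1) * (if c = t then x else 1)) (fun c => by
      by_cases hs : c = s <;> by_cases ht : c = t
      · simp only [if_pos hs, if_pos ht]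
        have : (fun x : ℝ => x * x) = fun x : ℝ => x ^ 2 := by
          funext x; rw [sq]
        rw [this]; exact gauss_sq_integrable v
      · simp only [if_pos hs, if_neg ht, mul_one]
        exact gauss_id_integrable v
      · simp only [if_neg hs, if_pos ht, one_mul]
        exact gauss_id_integrable v
      · simp only [if_neg hs, if_neg ht, mul_one]
        exact integrable_const (1:ℝ))
  have he : (fun r : Fin dd → ℝ =>
      ∏ c, ((if c = s then r c else 1) * (if c = t then r c else 1)))
      = fun r : Fin dd → ℝ => r s * r t := by
    funext r
    rw [Finset.prod_mul_distrib,
      Finset.prod_ite_eq' Finset.univ s (fun c => r c),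
      Finset.prod_ite_eq' Finset.univ t (fun c => r c)]
    simp
  rwa [he] at h

lemma integral_row (dd : ℕ) (v : NNReal) (s t : Fin dd) :
    ∫ r : Fin dd → ℝ, r s * r t ∂(Measure.pi fun _ => gaussianReal 0 v)
      = if s = t then (v:ℝ) else 0 := by
  letI : MeasureSpace ℝ := ⟨gaussianReal 0 v⟩
  haveI : IsProbabilityMeasure (volume : Measure ℝ) :=
    inferInstanceAs (IsProbabilityMeasure (gaussianReal 0 v))
  have h : ∫ r : Fin dd → ℝ,
      ∏ c, ((if c = s then r c else 1) * (if c = t then r c else 1))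
      = ∏ c : Fin dd, ∫ x : ℝ, ((if c = s then x else 1) * (if c = t then x else 1)) :=
    integral_fintype_prod_eq_prod
      (fun c x => (if c = s then x else 1) * (if c = t then x else 1))
  have he : (fun r : Fin dd → ℝ =>
      ∏ c, ((if c = s then r c else 1) * (if c = t then r c else 1)))
      = fun r : Fin dd → ℝ => r s * r t := by
    funext r
    rw [Finset.prod_mul_distrib,
      Finset.prod_ite_eq' Finset.univ s (fun c => r c),
      Finset.prod_ite_eq' Finset.univ t (fun c => r c)]
    simp
  rw [he] at h
  rw [show (∫ r : Fin dd → ℝ, r s * r t ∂(Measure.pi fun _ => gaussianReal 0 v))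
      = ∫ r : Fin dd → ℝ, r s * r t from rfl, h]
  by_cases hst : s = t
  · subst hst
    have hv : ∀ c : Fin dd,
        (∫ x : ℝ, ((if c = s then x else 1) * (if c = s then x else 1)) : ℝ)
        = if c = s then (v:ℝ) else 1 := by
      intro c
      by_cases hc : c = s
      · have : (fun x : ℝ => (if c = s then x else 1) * (if c = s then x else 1))
            = fun x : ℝ => x ^ 2 := by funext x; simp [hc, sq]
        rw [this, hc, if_pos rfl]
        exact gauss_sq_mean v
      · simp [hc, measure_univ]
    simp_rw [hv]
    rw [Finset.prod_ite_eq' Finset.univ s (fun _ => (v:ℝ))]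
    simp
  · rw [if_neg hst]
    refine Finset.prod_eq_zero (Finset.mem_univ s) ?_
    have : (fun x : ℝ => (if s = s then x else 1) * (if s = t then x else 1))
        = fun x : ℝ => x := by funext x; simp [hst]
    rw [this]
    exact gauss_mean v

end RowLemmas

section WLemmas

lemma integrable_W (kk dd : ℕ) (v : NNReal) (i : Fin kk) (s t : Fin dd) :
    Integrable (fun W : Fin kk → Fin dd → ℝ => W i s * W i t)
      (Measure.pi fun _ => Measure.pi fun _ => gaussianReal 0 v) := by
  letI : MeasureSpace ℝ := ⟨gaussianReal 0 v⟩
  haveI : IsProbabilityMeasure (volume : Measure ℝ) :=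
    inferInstanceAs (IsProbabilityMeasure (gaussianReal 0 v))
  have h : Integrable (fun W : Fin kk → Fin dd → ℝ =>
      ∏ j, (if j = i then W j s * W j t else 1)) :=
    Integrable.fintype_prod
      (f := fun j (r : Fin dd → ℝ) => if j = i then r s * r t else 1) (fun j => by
      by_cases hj : j = i
      · simp only [if_pos hj]
        exact integrable_row dd v s t
      · simp only [if_neg hj]
        exact integrable_const (1:ℝ))
  have he : (fun W : Fin kk → Fin dd → ℝ => ∏ j, (if j = i then W j s * W j t else 1))
      = fun W : Fin kk → Fin dd → ℝ => W i s * W i t := by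
    funext W
    rw [Finset.prod_ite_eq' Finset.univ i (fun j => W j s * W j t)]
    simp
  rwa [he] at h

lemma integral_W (kk dd : ℕ) (v : NNReal) (i : Fin kk) (s t : Fin dd) :
    ∫ W : Fin kk → Fin dd → ℝ, W i s * W i t
      ∂(Measure.pi fun _ => Measure.pi fun _ => gaussianReal 0 v)
      = if s = t then (v:ℝ) else 0 := by
  letI : MeasureSpace ℝ := ⟨gaussianReal 0 v⟩
  haveI : IsProbabilityMeasure (volume : Measure ℝ) :=
    inferInstanceAs (IsProbabilityMeasure (gaussianReal 0 v))
  have h : ∫ W : Fin kk → Fin dd → ℝ, ∏ j, (if j = i then W j s * W j t else 1)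
      = ∏ j : Fin kk, ∫ r : Fin dd → ℝ, (if j = i then r s * r t else 1) :=
    integral_fintype_prod_eq_prod
      (fun j (r : Fin dd → ℝ) => if j = i then r s * r t else 1)
  have he : (fun W : Fin kk → Fin dd → ℝ => ∏ j, (if j = i then W j s * W j t else 1))
      = fun W : Fin kk → Fin dd → ℝ => W i s * W i t := by
    funext W
    rw [Finset.prod_ite_eq' Finset.univ i (fun j => W j s * W j t)]
    simp
  rw [he] at h
  rw [show (∫ W : Fin kk → Fin dd → ℝ, W i s * W i t
      ∂(Measure.pi fun _ => Measure.pi fun _ => gaussianReal 0 v))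
      = ∫ W : Fin kk → Fin dd → ℝ, W i s * W i t from rfl, h]
  have hv : ∀ j : Fin kk, (∫ r : Fin dd → ℝ, (if j = i then r s * r t else 1) : ℝ)
      = if j = i then (if s = t then (v:ℝ) else 0) else 1 := by
    intro j
    by_cases hj : j = i
    · simp only [if_pos hj]
      exact integral_row dd v s t
    · simp [hj, measure_univ]
  simp_rw [hv]
  rw [Finset.prod_ite_eq' Finset.univ i (fun _ => (if s = t then (v:ℝ) else 0))]
  simp

end WLemmas

/-- The joint law of `(a, W)`: `a ∈ ℝ^k` has i.i.d. standard Gaussian entries, `W ∈ ℝ^{k×d}`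
has i.i.d. centered Gaussian entries of variance `v`, and `a` and `W` are independent
(the product Gaussian measure on all the entries). -/
noncomputable def gaussPairMeasure (k d : ℕ) (v : NNReal) :
    Measure ((Fin k → ℝ) × (Fin k → Fin d → ℝ)) :=
  (Measure.pi fun _ : Fin k => gaussianReal 0 1).prod
    (Measure.pi fun _ : Fin k => Measure.pi fun _ : Fin d => gaussianReal 0 v)

/-- Entrywise expectation of a random matrix. -/
noncomputable def matExp {Ω m n : Type*} [MeasurableSpace Ω]
    (μ : Measure Ω) (M : Ω → Matrix m n ℝ) : Matrix m n ℝ :=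
  Matrix.of fun i j => ∫ ω, M ω i j ∂μ

/-- expected centered NFM of Proposition (Expected NFM and AGOP).
For the one-hidden-layer quadratic network at initialization with `a` i.i.d. standard
Gaussian, `W` i.i.d. `N(0, 1/k)`, independent, data `X`, labels `y`, `Y := diag(y)` and
`Kn := X Wᵀ diag(a)² W Xᵀ`, one has `E[Xᵀ Y Kn Y X] = (Xᵀ Y X)²`. -/
theorem expectation_centered_nfm_quadratic
    (k d n : ℕ) (hk : 1 ≤ k) (hd : 1 ≤ d) (hn : 1 ≤ n)
    (X : Matrix (Fin n) (Fin d) ℝ) (y : Fin n → ℝ) :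
    matExp (gaussPairMeasure k d ((k : NNReal))⁻¹)
        (fun ω =>
          Xᵀ * Matrix.diagonal y *
            (X * ((Matrix.of ω.2)ᵀ * Matrix.diagonal (fun i => ω.1 i ^ 2) * Matrix.of ω.2) * Xᵀ) *
            Matrix.diagonal y * X) =
      (Xᵀ * Matrix.diagonal y * X) ^ 2 := by
  have hk0 : (k : ℝ) ≠ 0 := by
    have : 0 < k := hk
    positivity
  set v : NNReal := ((k : NNReal))⁻¹ with hv
  set μa := Measure.pi fun _ : Fin k => gaussianReal 0 1 with hμa
  set μW := Measure.pi fun _ : Fin k => Measure.pi fun _ : Fin d => gaussianReal 0 v with hμW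
  set B := Xᵀ * Matrix.diagonal y * X with hB
  ext p q
  simp only [matExp, Matrix.of_apply]
  have hμ : gaussPairMeasure k d v = μa.prod μW := rfl
  rw [hμ]
  -- pointwise expansion of the matrix entry
  have hexp : ∀ ω : (Fin k → ℝ) × (Fin k → Fin d → ℝ),
      (Xᵀ * Matrix.diagonal y *
        (X * ((Matrix.of ω.2)ᵀ * Matrix.diagonal (fun i => ω.1 i ^ 2) * Matrix.of ω.2) * Xᵀ) *
        Matrix.diagonal y * X) p q
      = ∑ s : Fin d, ∑ t : Fin d, ∑ i : Fin k,
          B p s * (B t q * (ω.1 i ^ 2 * (ω.2 i s * ω.2 i t))) := by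
    intro ω
    have hrw : Xᵀ * Matrix.diagonal y *
          (X * ((Matrix.of ω.2)ᵀ * Matrix.diagonal (fun i => ω.1 i ^ 2) * Matrix.of ω.2) * Xᵀ) *
          Matrix.diagonal y * X
        = B * ((Matrix.of ω.2)ᵀ * Matrix.diagonal (fun i => ω.1 i ^ 2) * Matrix.of ω.2) * B := by
      rw [hB]; simp only [Matrix.mul_assoc]
    rw [hrw]
    simp only [Matrix.mul_apply, Matrix.transpose_apply, Matrix.of_apply, Matrix.diagonal_apply,
      ite_mul, zero_mul, mul_ite, mul_zero, Finset.sum_ite_eq, Finset.sum_ite_eq',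
      Finset.mem_univ, if_true, Finset.sum_mul, Finset.mul_sum]
    rw [Finset.sum_comm]
    refine Finset.sum_congr rfl fun s _ => Finset.sum_congr rfl fun t _ =>
      Finset.sum_congr rfl fun i _ => by ring
  rw [integral_congr_ae (Filter.Eventually.of_forall hexp)]
  -- integrability of the base terms
  have hbase : ∀ (i : Fin k) (s t : Fin d),
      Integrable (fun ω : (Fin k → ℝ) × (Fin k → Fin d → ℝ) =>
        ω.1 i ^ 2 * (ω.2 i s * ω.2 i t)) (μa.prod μW) :=
    fun i s t => Integrable.mul_prod (integrable_pi_sq k 1 i) (integrable_W k d v i s t)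
  have hterm : ∀ (i : Fin k) (s t : Fin d),
      Integrable (fun ω : (Fin k → ℝ) × (Fin k → Fin d → ℝ) =>
        B p s * (B t q * (ω.1 i ^ 2 * (ω.2 i s * ω.2 i t)))) (μa.prod μW) :=
    fun i s t => ((hbase i s t).const_mul (B t q)).const_mul (B p s)
  -- value of the base integrals
  have hbase_val : ∀ (i : Fin k) (s t : Fin d),
      ∫ ω : (Fin k → ℝ) × (Fin k → Fin d → ℝ),
        ω.1 i ^ 2 * (ω.2 i s * ω.2 i t) ∂(μa.prod μW)
      = if s = t then ((k:ℝ))⁻¹ else 0 := by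
    intro i s t
    rw [hμa, hμW, integral_prod_mul (fun a : Fin k → ℝ => a i ^ 2)
      (fun W : Fin k → Fin d → ℝ => W i s * W i t),
      integral_pi_sq k 1 i, integral_W k d v i s t]
    by_cases hst : s = t <;> simp [hst, hv]
  -- exchange integral and sums
  rw [integral_finset_sum _ (fun s _ => integrable_finset_sum _
    (fun t _ => integrable_finset_sum _ (fun i _ => hterm i s t)))]
  have hsum : ∀ s : Fin d,
      ∫ ω : (Fin k → ℝ) × (Fin k → Fin d → ℝ), ∑ t : Fin d, ∑ i : Fin k,
        B p s * (B t q * (ω.1 i ^ 2 * (ω.2 i s * ω.2 i t))) ∂(μa.prod μW)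
      = ∑ t : Fin d, ∑ i : Fin k,
          B p s * (B t q * (if s = t then ((k:ℝ))⁻¹ else 0)) := by
    intro s
    rw [integral_finset_sum _ (fun t _ => integrable_finset_sum _ (fun i _ => hterm i s t))]
    refine Finset.sum_congr rfl fun t _ => ?_
    rw [integral_finset_sum _ (fun i _ => hterm i s t)]
    refine Finset.sum_congr rfl fun i _ => ?_
    rw [integral_const_mul, integral_const_mul, hbase_val i s t]
  rw [Finset.sum_congr rfl (fun s _ => hsum s)]
  -- final combinatorial computation
  rw [sq, Matrix.mul_apply]
  simp only [mul_ite, mul_zero, Finset.sum_const, Finset.card_univ, Fintype.card_fin,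
    nsmul_eq_mul, Finset.sum_ite_eq, Finset.mem_univ, if_true]
  refine Finset.sum_congr rfl fun s _ => ?_
  field_simp
end
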